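/- Let S and T be stochastic matrices on a finite set Ω, both reversible with respect to a fully supported probability measure μ and positive semidefinite in L²(μ), with S idempotent (S² = S). Then for every a ∈ [0,1], the spectral gaps satisfy λ(S T S) ≥ λ(aS + (1−a)T). -/

import Mathlib

open scoped BigOperators

/-- Inner product in `L²(μ)`: `⟨f,g⟩_μ = Σ_x f(x)g(x)μ(x)`. -/
noncomputable def innerMu {Ω : Type*} [Fintype Ω] (μ f g : Ω → ℝ) : ℝ :=
  ∑ x, f x * g x * μ x

/-- Variance w.r.t. `μ`. -/
noncomputable def varMu {Ω : Type*} [Fintype Ω] (μ f : Ω → ℝ) : ℝ :=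
  ∑ x, (f x - ∑ y, f y * μ y) ^ 2 * μ x

/-- Dirichlet form `⟨f, (I − P) f⟩_μ`. -/
noncomputable def dirichletForm {Ω : Type*} [Fintype Ω]
    (μ : Ω → ℝ) (P : Matrix Ω Ω ℝ) (f : Ω → ℝ) : ℝ :=
  innerMu μ f (fun x => f x - P.mulVec f x)

/-- Spectral gap of a reversible positive semidefinite chain, via the variational
characterization `λ(P) = min { ⟨f,(I−P)f⟩_μ / Var_μ(f) : Var_μ(f) ≠ 0 }`. -/
noncomputable def gapD {Ω : Type*} [Fintype Ω] (μ : Ω → ℝ) (P : Matrix Ω Ω ℝ) : ℝ :=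
  sInf {r : ℝ | ∃ f : Ω → ℝ, varMu μ f ≠ 0 ∧ r = dirichletForm μ P f / varMu μ f}

section Aux
variable {Ω : Type*} [Fintype Ω]

lemma innerMu_comm (μ f g : Ω → ℝ) : innerMu μ f g = innerMu μ g f := by
  unfold innerMu; exact Finset.sum_congr rfl (fun x _ => by ring)

lemma innerMu_adj (μ : Ω → ℝ) (P : Matrix Ω Ω ℝ)
    (hrev : ∀ x y, μ x * P x y = μ y * P y x) (f g : Ω → ℝ) :
    innerMu μ f (P.mulVec g) = innerMu μ (P.mulVec f) g := by
  unfold innerMu Matrix.mulVec dotProduct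
  have L : ∀ x : Ω, f x * (∑ y, P x y * g y) * μ x = ∑ y, f x * (P x y * g y) * μ x := by
    intro x; rw [Finset.mul_sum, Finset.sum_mul]
  have R : ∀ y : Ω, (∑ x, P y x * f x) * g y * μ y = ∑ x, (P y x * f x) * g y * μ y := by
    intro y; rw [Finset.sum_mul, Finset.sum_mul]
  simp only [L, R]
  rw [Finset.sum_comm]
  refine Finset.sum_congr rfl fun y _ => Finset.sum_congr rfl fun x _ => ?_
  have := hrev x y
  linear_combination f x * g y * this

lemma sum_mulVec_mu (μ : Ω → ℝ) (P : Matrix Ω Ω ℝ)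
    (hrev : ∀ x y, μ x * P x y = μ y * P y x) (hrow : ∀ x, ∑ y, P x y = 1) (f : Ω → ℝ) :
    ∑ x, P.mulVec f x * μ x = ∑ x, f x * μ x := by
  unfold Matrix.mulVec dotProduct
  have L : ∀ x : Ω, (∑ y, P x y * f y) * μ x = ∑ y, P x y * f y * μ x := by
    intro x; rw [Finset.sum_mul]
  simp only [L]
  rw [Finset.sum_comm]
  refine Finset.sum_congr rfl fun y _ => ?_
  have : ∀ x : Ω, P x y * f y * μ x = μ y * P y x * f y := by
    intro x; have := hrev x y; linear_combination f y * this
  rw [Finset.sum_congr rfl fun x _ => this x, ← Finset.sum_mul, ← Finset.mul_sum,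
    Finset.sum_congr rfl (fun x _ => rfl)]
  rw [hrow y]; ring

lemma varMu_eq (μ : Ω → ℝ) (hsum : ∑ x, μ x = 1) (f : Ω → ℝ) :
    varMu μ f = innerMu μ f f - (∑ y, f y * μ y) ^ 2 := by
  unfold varMu innerMu
  set m := ∑ y, f y * μ y with hm
  have : ∀ x : Ω, (f x - m) ^ 2 * μ x = f x * f x * μ x - 2 * m * (f x * μ x) + m ^ 2 * μ x := by
    intro x; ring
  rw [Finset.sum_congr rfl fun x _ => this x]
  rw [Finset.sum_add_distrib, Finset.sum_sub_distrib, ← Finset.mul_sum, ← Finset.mul_sum, ← hm,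
    hsum]
  ring

lemma varMu_nonneg (μ : Ω → ℝ) (hpos : ∀ x, 0 < μ x) (f : Ω → ℝ) : 0 ≤ varMu μ f :=
  Finset.sum_nonneg fun x _ => mul_nonneg (sq_nonneg _) (hpos x).le

lemma innerMu_self_nonneg (μ : Ω → ℝ) (hpos : ∀ x, 0 < μ x) (f : Ω → ℝ) :
    0 ≤ innerMu μ f f :=
  Finset.sum_nonneg fun x _ => mul_nonneg (mul_self_nonneg _) (hpos x).le

lemma dirichletForm_eq (μ : Ω → ℝ) (P : Matrix Ω Ω ℝ) (f : Ω → ℝ) :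
    dirichletForm μ P f = innerMu μ f f - innerMu μ f (P.mulVec f) := by
  unfold dirichletForm innerMu
  rw [← Finset.sum_sub_distrib]
  exact Finset.sum_congr rfl fun x _ => by ring

lemma dirichletForm_nonneg (μ : Ω → ℝ) (hpos : ∀ x, 0 < μ x) (P : Matrix Ω Ω ℝ)
    (hnn : ∀ x y, 0 ≤ P x y) (hrow : ∀ x, ∑ y, P x y = 1)
    (hrev : ∀ x y, μ x * P x y = μ y * P y x) (f : Ω → ℝ) :
    0 ≤ dirichletForm μ P f := by
  set A := ∑ x, ∑ y, μ x * P x y * (f x * f x) with hAdef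
  set B := ∑ x, ∑ y, μ x * P x y * (f x * f y) with hBdef
  set C := ∑ x, ∑ y, μ x * P x y * (f y * f y) with hCdef
  have hCA : C = A := by
    rw [hCdef, hAdef, Finset.sum_comm]
    refine Finset.sum_congr rfl fun x _ => Finset.sum_congr rfl fun y _ => ?_
    linear_combination (f x * f x) * hrev y x
  have hE : dirichletForm μ P f = A - B := by
    unfold dirichletForm innerMu Matrix.mulVec dotProduct
    rw [hAdef, hBdef, ← Finset.sum_sub_distrib]
    refine Finset.sum_congr rfl fun x _ => ?_
    have e1 : ∑ y, (μ x * P x y * (f x * f x) - μ x * P x y * (f x * f y))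
        = μ x * (f x * f x) * (∑ y, P x y) - μ x * f x * ∑ y, P x y * f y := by
      rw [Finset.sum_sub_distrib, Finset.mul_sum, Finset.mul_sum]
      congr 1
      · exact Finset.sum_congr rfl fun y _ => by ring
      · exact Finset.sum_congr rfl fun y _ => by ring
    rw [← Finset.sum_sub_distrib, e1, hrow x]; ring
  have hSq : ∑ x, ∑ y, μ x * P x y * (f x - f y) ^ 2 = A - 2 * B + C := by
    have expand : ∀ x y : Ω, μ x * P x y * (f x - f y) ^ 2
        = μ x * P x y * (f x * f x) - 2 * (μ x * P x y * (f x * f y))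
          + μ x * P x y * (f y * f y) := fun x y => by ring
    simp only [expand, Finset.sum_add_distrib, Finset.sum_sub_distrib, ← Finset.mul_sum]
    rw [hAdef, hBdef, hCdef]
  have hnn2 : 0 ≤ ∑ x, ∑ y, μ x * P x y * (f x - f y) ^ 2 :=
    Finset.sum_nonneg fun x _ => Finset.sum_nonneg fun y _ =>
      mul_nonneg (mul_nonneg (hpos x).le (hnn x y)) (sq_nonneg _)
  rw [hSq] at hnn2
  linarith

lemma varMu_sub_const (μ : Ω → ℝ) (hsum : ∑ x, μ x = 1) (f : Ω → ℝ) (c : ℝ) :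
    varMu μ (fun x => f x - c) = varMu μ f := by
  unfold varMu
  have : ∑ y, (f y - c) * μ y = (∑ y, f y * μ y) - c := by
    rw [Finset.sum_congr rfl fun y _ => (by ring : (f y - c) * μ y = f y * μ y - c * μ y),
      Finset.sum_sub_distrib, ← Finset.mul_sum, hsum, mul_one]
  rw [this]
  exact Finset.sum_congr rfl fun x _ => by ring

end Aux

/-- If `S`, `T` are stochastic, reversible w.r.t. a fully supported `μ`, positive
semidefinite, and `S` is idempotent, then `λ(STS) ≥ λ(aS + (1−a)T)` for all `a ∈ [0,1]`. -/
theorem statement17 {Ω : Type*} [Fintype Ω] [DecidableEq Ω]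
    (μ : Ω → ℝ) (hpos : ∀ x, 0 < μ x) (hsum : ∑ x, μ x = 1)
    (S T : Matrix Ω Ω ℝ)
    (hSnn : ∀ x y, 0 ≤ S x y) (hSrow : ∀ x, ∑ y, S x y = 1)
    (hTnn : ∀ x y, 0 ≤ T x y) (hTrow : ∀ x, ∑ y, T x y = 1)
    (hSrev : ∀ x y, μ x * S x y = μ y * S y x)
    (hTrev : ∀ x y, μ x * T x y = μ y * T y x)
    (hSpsd : ∀ f : Ω → ℝ, 0 ≤ innerMu μ f (S.mulVec f))
    (hTpsd : ∀ f : Ω → ℝ, 0 ≤ innerMu μ f (T.mulVec f))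
    (hidem : S * S = S)
    (a : ℝ) (ha : a ∈ Set.Icc (0 : ℝ) 1) :
    gapD μ (a • S + (1 - a) • T) ≤ gapD μ (S * T * S) := by
  obtain ⟨ha0, ha1⟩ := ha
  set M := a • S + (1 - a) • T with hM
  have hMapp : ∀ x y, M x y = a * S x y + (1 - a) * T x y := by
    intro x y; simp [hM, Matrix.add_apply, Matrix.smul_apply, smul_eq_mul]
  have hMnn : ∀ x y, 0 ≤ M x y := by
    intro x y; rw [hMapp]
    exact add_nonneg (mul_nonneg ha0 (hSnn x y)) (mul_nonneg (by linarith) (hTnn x y))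
  have hMrow : ∀ x, ∑ y, M x y = 1 := by
    intro x
    rw [Finset.sum_congr rfl fun y _ => hMapp x y, Finset.sum_add_distrib,
      ← Finset.mul_sum, ← Finset.mul_sum, hSrow x, hTrow x]
    ring
  have hMrev : ∀ x y, μ x * M x y = μ y * M y x := by
    intro x y
    rw [hMapp, hMapp]
    linear_combination a * hSrev x y + (1 - a) * hTrev x y
  have hMinner : ∀ g h : Ω → ℝ, innerMu μ h (M.mulVec g)
      = a * innerMu μ h (S.mulVec g) + (1 - a) * innerMu μ h (T.mulVec g) := by
    intro g h
    unfold innerMu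
    rw [Finset.mul_sum, Finset.mul_sum, ← Finset.sum_add_distrib]
    refine Finset.sum_congr rfl fun x _ => ?_
    rw [hM, Matrix.add_mulVec, Matrix.smul_mulVec, Matrix.smul_mulVec]
    simp only [Pi.add_apply, Pi.smul_apply, smul_eq_mul]
    ring
  by_cases H : ∃ f : Ω → ℝ, varMu μ f ≠ 0
  · obtain ⟨f0, hf0⟩ := H
    have hbdd : BddBelow {r : ℝ | ∃ f : Ω → ℝ, varMu μ f ≠ 0 ∧ r = dirichletForm μ M f / varMu μ f} := by
      refine ⟨0, ?_⟩
      rintro r ⟨g, hg, rfl⟩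
      exact div_nonneg (dirichletForm_nonneg μ hpos M hMnn hMrow hMrev g) (varMu_nonneg μ hpos g)
    have gap_le : ∀ g : Ω → ℝ, varMu μ g ≠ 0 → gapD μ M ≤ dirichletForm μ M g / varMu μ g := by
      intro g hg
      unfold gapD
      exact csInf_le hbdd ⟨g, hg, rfl⟩
    -- t ≤ 1
    have ht1 : gapD μ M ≤ 1 := by
      set m0 := ∑ y, f0 y * μ y with hm0
      set h := fun x => f0 x - m0 with hh
      have hvh : varMu μ h = varMu μ f0 := varMu_sub_const μ hsum f0 m0
      have hmean : ∑ y, h y * μ y = 0 := by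
        rw [Finset.sum_congr rfl fun y _ =>
          (by simp only [hh]; ring : h y * μ y = f0 y * μ y - m0 * μ y),
          Finset.sum_sub_distrib, ← Finset.mul_sum, hsum, ← hm0]
        ring
      have hvar_eq : varMu μ h = innerMu μ h h := by
        rw [varMu_eq μ hsum h, hmean]; ring
      have hMpsd : 0 ≤ innerMu μ h (M.mulVec h) := by
        rw [hMinner]
        exact add_nonneg (mul_nonneg ha0 (hSpsd h)) (mul_nonneg (by linarith) (hTpsd h))
      have hEle : dirichletForm μ M h ≤ varMu μ h := by
        rw [dirichletForm_eq, hvar_eq]; linarith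
      have hvhne : varMu μ h ≠ 0 := by rw [hvh]; exact hf0
      have hvhpos : 0 < varMu μ h := lt_of_le_of_ne (varMu_nonneg μ hpos h) (Ne.symm hvhne)
      calc gapD μ M ≤ dirichletForm μ M h / varMu μ h := gap_le h hvhne
        _ ≤ 1 := (div_le_one hvhpos).mpr hEle
    -- main bound for each f
    have key : ∀ r ∈ {r : ℝ | ∃ f : Ω → ℝ, varMu μ f ≠ 0 ∧ r = dirichletForm μ (S * T * S) f / varMu μ f},
        gapD μ M ≤ r := by
      rintro r ⟨f, hvf, rfl⟩
      set g := S.mulVec f with hg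
      set m := ∑ y, f y * μ y with hm
      have hmg : ∑ y, g y * μ y = m := sum_mulVec_mu μ S hSrev hSrow f
      have hVf : varMu μ f = innerMu μ f f - m ^ 2 := varMu_eq μ hsum f
      have hVg : varMu μ g = innerMu μ g g - m ^ 2 := by rw [varMu_eq μ hsum g, hmg]
      have hgg : innerMu μ g g = innerMu μ f g := by
        have e := innerMu_adj μ S hSrev f (S.mulVec f)
        rw [Matrix.mulVec_mulVec, hidem] at e
        rw [hg]
        exact e.symm
      have hc : 0 ≤ innerMu μ f f - innerMu μ g g := by
        have h0 : 0 ≤ innerMu μ (fun x => f x - g x) (fun x => f x - g x) :=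
          innerMu_self_nonneg μ hpos _
        have hexp : innerMu μ (fun x => f x - g x) (fun x => f x - g x)
            = innerMu μ f f - 2 * innerMu μ f g + innerMu μ g g := by
          unfold innerMu
          rw [Finset.sum_congr rfl fun x _ =>
            (by ring : (f x - g x) * (f x - g x) * μ x
              = f x * f x * μ x - 2 * (f x * g x * μ x) + g x * g x * μ x),
            Finset.sum_add_distrib, Finset.sum_sub_distrib, ← Finset.mul_sum]
        rw [hexp, ← hgg] at h0
        linarith
      have hSg : S.mulVec g = g := by
        rw [hg, Matrix.mulVec_mulVec, hidem]
      have hDSTS : dirichletForm μ (S * T * S) f = innerMu μ f f - innerMu μ g (T.mulVec g) := by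
        rw [dirichletForm_eq]
        congr 1
        rw [← Matrix.mulVec_mulVec, ← Matrix.mulVec_mulVec, ← hg,
          innerMu_adj μ S hSrev f (T.mulVec g), ← hg]
      have hEMg : dirichletForm μ M g = (1 - a) * (innerMu μ g g - innerMu μ g (T.mulVec g)) := by
        rw [dirichletForm_eq, hMinner, hSg]; ring
      have hD : 0 ≤ innerMu μ g g - innerMu μ g (T.mulVec g) := by
        have := dirichletForm_nonneg μ hpos T hTnn hTrow hTrev g
        rw [dirichletForm_eq] at this
        linarith
      have hVgnn := varMu_nonneg μ hpos g
      have htVg : gapD μ M * varMu μ g ≤ innerMu μ g g - innerMu μ g (T.mulVec g) := by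
        rcases eq_or_lt_of_le hVgnn with h0 | hposg
        · rw [← h0, mul_zero]; exact hD
        · have hle := gap_le g (ne_of_gt hposg)
          rw [hEMg] at hle
          have h2 : gapD μ M * varMu μ g ≤ (1 - a) * (innerMu μ g g - innerMu μ g (T.mulVec g)) :=
            (le_div_iff₀ hposg).mp hle
          nlinarith
      have hVfpos : 0 < varMu μ f := lt_of_le_of_ne (varMu_nonneg μ hpos f) (Ne.symm hvf)
      rw [hDSTS, le_div_iff₀ hVfpos]
      nlinarith [ht1, hc, htVg, hVf, hVg]
    show gapD μ M ≤ sInf {r : ℝ | ∃ f : Ω → ℝ, varMu μ f ≠ 0 ∧ r = dirichletForm μ (S * T * S) f / varMu μ f}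
    exact le_csInf ⟨_, f0, hf0, rfl⟩ key
  · push_neg at H
    have hempty : ∀ P : Matrix Ω Ω ℝ, gapD μ P = 0 := by
      intro P
      unfold gapD
      have : {r : ℝ | ∃ f : Ω → ℝ, varMu μ f ≠ 0 ∧ r = dirichletForm μ P f / varMu μ f} = ∅ := by
        ext r
        simp only [Set.mem_setOf_eq, Set.mem_empty_iff_false, iff_false, not_exists]
        rintro f ⟨hf, -⟩
        exact hf (H f)
      rw [this, Real.sInf_empty]
    rw [hempty, hempty]
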